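/- The singular values of the n×n lower triangular all-ones matrix Tₙ are 1/(2 sin((2j−1)π/(4n+2))) for j = 1,…,n. -/

import Mathlib

open Matrix Real

/-- `‖B‖_{2→∞}`: the largest Euclidean norm of a row of `B`. -/
noncomputable def rowNorm {m n : Type*} [Fintype m] [Fintype n] (B : Matrix m n ℝ) : ℝ :=
  ⨆ i, Real.sqrt (∑ j, B i j ^ 2)

/-- `‖C‖_{1→2}`: the largest Euclidean norm of a column of `C`. -/
noncomputable def colNorm {m n : Type*} [Fintype m] [Fintype n] (C : Matrix m n ℝ) : ℝ :=
  ⨆ j, Real.sqrt (∑ i, C i j ^ 2)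

/-- The `γ₂` factorization norm of a real matrix. -/
noncomputable def gamma2 {m n : Type*} [Fintype m] [Fintype n] (A : Matrix m n ℝ) : ℝ :=
  sInf {t | ∃ (k : ℕ) (B : Matrix m (Fin k) ℝ) (C : Matrix (Fin k) n ℝ),
    A = B * C ∧ t = rowNorm B * colNorm C}

/-- `Tₙ`: the n×n lower triangular all-ones matrix. -/
def T (n : ℕ) : Matrix (Fin n) (Fin n) ℝ :=
  Matrix.of fun i j => if j ≤ i then 1 else 0

section Aux
open Finset

lemma sum_cos_odd (α : ℝ) (hs : Real.sin α ≠ 0) (m : ℕ) :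
    ∑ k ∈ Finset.range m, Real.cos ((2*(k:ℝ)+1) * α)
      = Real.sin (2*(m:ℝ)*α) / (2*Real.sin α) := by
  have h := Finset.sum_range_sub (fun k : ℕ => Real.sin (2*(k:ℝ)*α) / (2*Real.sin α)) m
  simp only [Nat.cast_zero] at h
  rw [show (2:ℝ)*0*α = 0 by ring] at h
  rw [Real.sin_zero, zero_div, sub_zero] at h
  rw [← h]
  apply Finset.sum_congr rfl
  intro k _
  push_cast
  rw [div_sub_div_same, Real.sin_sub_sin,
    show (2*((k:ℝ)+1)*α - 2*(k:ℝ)*α)/2 = α by ring,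
    show (2*((k:ℝ)+1)*α + 2*(k:ℝ)*α)/2 = (2*(k:ℝ)+1)*α by ring]
  field_simp

lemma sum_sin_even (α : ℝ) (hs : Real.sin α ≠ 0) (m : ℕ) :
    ∑ k ∈ Finset.range m, Real.sin (2*((k:ℝ)+1)*α) / (2*Real.sin α)
      = (Real.cos α - Real.cos ((2*(m:ℝ)+1)*α)) / (2*Real.sin α)^2 := by
  have h := Finset.sum_range_sub' (fun k : ℕ => Real.cos ((2*(k:ℝ)+1)*α) / (2*Real.sin α)^2) m
  simp only [Nat.cast_zero] at h
  rw [show (2:ℝ)*0+1 = 1 by ring, one_mul] at h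
  rw [← div_sub_div_same, ← h]
  apply Finset.sum_congr rfl
  intro k _
  push_cast
  rw [div_sub_div_same, Real.cos_sub_cos,
    show ((2*(k:ℝ)+1)*α + (2*((k:ℝ)+1)+1)*α)/2 = 2*((k:ℝ)+1)*α by ring,
    show ((2*(k:ℝ)+1)*α - (2*((k:ℝ)+1)+1)*α)/2 = -α by ring]
  rw [Real.sin_neg]
  field_simp

lemma T_mulVec_cos (n : ℕ) (α : ℝ) (hs : Real.sin α ≠ 0) (i : Fin n) :
    (T n).mulVec (fun k : Fin n => Real.cos ((2*((k:ℕ):ℝ)+1) * α)) i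
      = Real.sin (2*(((i:ℕ):ℝ)+1)*α) / (2*Real.sin α) := by
  have hstep : ∀ k : Fin n, T n i k * Real.cos ((2*((k:ℕ):ℝ)+1) * α)
      = (fun k : ℕ => if k ≤ (i:ℕ) then Real.cos ((2*(k:ℝ)+1) * α) else 0) (k:ℕ) := by
    intro k
    simp only [T, Matrix.of_apply, Fin.le_def, ite_mul, one_mul, zero_mul]
  rw [Matrix.mulVec, dotProduct]
  rw [Finset.sum_congr rfl (fun k _ => hstep k),
    Fin.sum_univ_eq_sum_range (fun k : ℕ => if k ≤ (i:ℕ) then Real.cos ((2*(k:ℝ)+1) * α) else 0) n]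
  rw [← Finset.sum_subset (Finset.range_subset_range.2 i.isLt)
    (fun x _ hx => if_neg (by simpa using Nat.lt_of_succ_le (not_lt.1 (by simpa [Nat.lt_succ_iff] using hx))))]
  rw [Finset.sum_congr rfl (fun k hk => if_pos (Nat.lt_succ_iff.1 (Finset.mem_range.1 hk)))]
  rw [sum_cos_odd α hs (i+1)]
  push_cast
  ring_nf

lemma Tt_mulVec_sin (n : ℕ) (α : ℝ) (hs : Real.sin α ≠ 0)
    (hc : Real.cos ((2*(n:ℝ)+1)*α) = 0) (i : Fin n) :
    (T n)ᵀ.mulVec (fun k : Fin n => Real.sin (2*(((k:ℕ):ℝ)+1)*α) / (2*Real.sin α)) i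
      = Real.cos ((2*((i:ℕ):ℝ)+1)*α) / (2*Real.sin α)^2 := by
  have hstep : ∀ k : Fin n, (T n)ᵀ i k * (Real.sin (2*(((k:ℕ):ℝ)+1)*α) / (2*Real.sin α))
      = (fun k : ℕ => if (i:ℕ) ≤ k then Real.sin (2*((k:ℝ)+1)*α) / (2*Real.sin α) else 0) (k:ℕ) := by
    intro k
    simp only [Matrix.transpose_apply, T, Matrix.of_apply, Fin.le_def, ite_mul, one_mul, zero_mul]
  rw [Matrix.mulVec, dotProduct]
  rw [Finset.sum_congr rfl (fun k _ => hstep k),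
    Fin.sum_univ_eq_sum_range (fun k : ℕ => if (i:ℕ) ≤ k then Real.sin (2*((k:ℝ)+1)*α) / (2*Real.sin α) else 0) n]
  rw [← Finset.sum_filter]
  have hfil : (Finset.range n).filter (fun k => (i:ℕ) ≤ k) = Finset.Ico (i:ℕ) n := by
    ext k; simp [Finset.mem_filter, Finset.mem_Ico, and_comm]
  rw [hfil, Finset.sum_Ico_eq_sub _ (le_of_lt i.isLt),
    sum_sin_even α hs n, sum_sin_even α hs (i:ℕ), hc, sub_zero]
  ring

lemma key (n : ℕ) (α : ℝ) (hs : Real.sin α ≠ 0)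
    (hc : Real.cos ((2*(n:ℝ)+1)*α) = 0) :
    ((T n)ᵀ * T n).mulVec (fun k : Fin n => Real.cos ((2*((k:ℕ):ℝ)+1) * α)) =
      (1/(2*Real.sin α)^2) • (fun k : Fin n => Real.cos ((2*((k:ℕ):ℝ)+1) * α)) := by
  rw [← Matrix.mulVec_mulVec]
  have hT : (T n).mulVec (fun k : Fin n => Real.cos ((2*((k:ℕ):ℝ)+1) * α))
      = fun k : Fin n => Real.sin (2*(((k:ℕ):ℝ)+1)*α) / (2*Real.sin α) :=
    funext fun i => T_mulVec_cos n α hs i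
  rw [hT]
  funext i
  rw [Tt_mulVec_sin n α hs hc i]
  simp only [Pi.smul_apply, smul_eq_mul]
  ring


lemma mem_spectrum_of_mulVec {n : ℕ} {A : Matrix (Fin n) (Fin n) ℝ} {v : Fin n → ℝ}
    (hv : v ≠ 0) {μ : ℝ} (h : A.mulVec v = μ • v) : μ ∈ spectrum ℝ A := by
  have he : Module.End.HasEigenvalue (Matrix.toLin' A) μ :=
    Module.End.hasEigenvalue_of_hasEigenvector
      ⟨by rw [Module.End.mem_eigenspace_iff, Matrix.toLin'_apply, h], hv⟩
  have := Module.End.hasEigenvalue_iff_mem_spectrum.1 he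
  rwa [show Matrix.toLin' A = Matrix.toLinAlgEquiv' A from rfl,
    AlgEquiv.spectrum_eq Matrix.toLinAlgEquiv' A] at this

noncomputable def ang (n j : ℕ) : ℝ := (2*(j:ℝ)+1) * Real.pi / (4*(n:ℝ)+2)

lemma ang_mem {n j : ℕ} (h : j < n) : ang n j ∈ Set.Ioo 0 (Real.pi/2) := by
  unfold ang
  constructor
  · positivity
  · rw [div_lt_iff₀ (by positivity)]
    have : (2*(j:ℝ)+1) < (4*(n:ℝ)+2)/2 := by
      have : (j:ℝ) + 1 ≤ n := by exact_mod_cast Nat.succ_le_of_lt h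
      linarith
    calc (2*(j:ℝ)+1) * Real.pi < ((4*(n:ℝ)+2)/2) * Real.pi := by
          apply mul_lt_mul_of_pos_right this Real.pi_pos
      _ = Real.pi / 2 * (4*(n:ℝ)+2) := by ring

lemma sin_ang_pos {n j : ℕ} (h : j < n) : 0 < Real.sin (ang n j) := by
  obtain ⟨h1, h2⟩ := ang_mem h
  exact Real.sin_pos_of_pos_of_lt_pi h1 (h2.trans (by linarith [Real.pi_pos]))

lemma cos_ang_eq_zero {n j : ℕ} (h : j < n) : Real.cos ((2*(n:ℝ)+1) * ang n j) = 0 := by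
  have : (2*(n:ℝ)+1) * ang n j = (2*(j:ℝ)+1) * (Real.pi/2) := by
    unfold ang
    have hne : (4*(n:ℝ)+2) ≠ 0 := by positivity
    field_simp
    ring
  rw [this, Real.cos_eq_zero_iff]
  exact ⟨j, by push_cast; ring⟩

noncomputable def lam (n j : ℕ) : ℝ := 1 / (2 * Real.sin (ang n j))^2

lemma lam_inj (n : ℕ) : Set.InjOn (fun j => lam n j) (Set.Iio n) := by
  intro a ha b hb hab
  simp only [lam] at hab
  have ha' := ang_mem ha
  have hb' := ang_mem hb
  have hsa := sin_ang_pos ha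
  have hsb := sin_ang_pos hb
  have h2 : (2 * Real.sin (ang n a))^2 = (2 * Real.sin (ang n b))^2 := by
    have h1 : ((2 * Real.sin (ang n a))^2)⁻¹ = ((2 * Real.sin (ang n b))^2)⁻¹ := by
      simpa [one_div] using hab
    exact inv_injective h1
  have h3 : Real.sin (ang n a) = Real.sin (ang n b) := by nlinarith
  have h4 : ang n a = ang n b := by
    apply Real.strictMonoOn_sin.injOn _ _ h3
    · exact ⟨by linarith [ha'.1, Real.pi_pos], le_of_lt ha'.2⟩
    · exact ⟨by linarith [hb'.1, Real.pi_pos], le_of_lt hb'.2⟩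
  unfold ang at h4
  have hne : (4*(n:ℝ)+2) ≠ 0 := by positivity
  field_simp at h4
  exact_mod_cast (by linarith : (a:ℝ) = b)


end Aux

/-- the singular values of `Tₙ` (the square roots of the eigenvalues
of `Tₙᵀ * Tₙ`) are `1/(2 sin((2j−1)π/(4n+2)))`, `j = 1,…,n`. -/
theorem singularValues_T (n : ℕ) :
    ∃ σ : Equiv.Perm (Fin n), ∀ i : Fin n,
      Real.sqrt ((show ((T n)ᵀ * T n).IsHermitian by
        rw [Matrix.IsHermitian, Matrix.conjTranspose_mul, Matrix.conjTranspose_eq_transpose_of_trivial,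
          Matrix.conjTranspose_eq_transpose_of_trivial, Matrix.transpose_transpose]).eigenvalues i) =
        1 / (2 * Real.sin ((2 * ((σ i : ℕ) : ℝ) + 1) * Real.pi / (4 * n + 2))) := by
  classical
  set e : Fin n → ℝ := (show ((T n)ᵀ * T n).IsHermitian by
          rw [Matrix.IsHermitian, Matrix.conjTranspose_mul, Matrix.conjTranspose_eq_transpose_of_trivial,
            Matrix.conjTranspose_eq_transpose_of_trivial, Matrix.transpose_transpose]).eigenvalues with he
  have hrange : ∀ j : Fin n, lam n (j:ℕ) ∈ Set.range e := by
    intro j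
    have hs := sin_ang_pos j.isLt
    have hcz := cos_ang_eq_zero j.isLt
    have hk := key n (ang n (j:ℕ)) (ne_of_gt hs) hcz
    have hvne : (fun k : Fin n => Real.cos ((2*((k:ℕ):ℝ)+1) * ang n (j:ℕ))) ≠ 0 := by
      intro h0
      have h00 := congrFun h0 ⟨0, j.pos⟩
      simp only [Pi.zero_apply, Fin.val_mk, Nat.cast_zero, mul_zero, zero_add, one_mul] at h00
      have hmem := ang_mem j.isLt
      have hcp := Real.cos_pos_of_mem_Ioo
        ⟨by linarith [hmem.1, Real.pi_pos], hmem.2⟩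
      linarith
    have hmem := mem_spectrum_of_mulVec hvne hk
    rw [Matrix.IsHermitian.spectrum_real_eq_range_eigenvalues
      (show ((T n)ᵀ * T n).IsHermitian by
          rw [Matrix.IsHermitian, Matrix.conjTranspose_mul, Matrix.conjTranspose_eq_transpose_of_trivial,
            Matrix.conjTranspose_eq_transpose_of_trivial, Matrix.transpose_transpose])] at hmem
    unfold lam
    exact hmem
  have hinj : Function.Injective (fun j : Fin n => lam n (j:ℕ)) := by
    intro a b hab
    exact Fin.ext (lam_inj n a.isLt b.isLt hab)
  have hsub : Finset.image (fun j : Fin n => lam n (j:ℕ)) Finset.univ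
      ⊆ Finset.image e Finset.univ := by
    intro x hx
    simp only [Finset.mem_image, Finset.mem_univ, true_and] at hx ⊢
    obtain ⟨j, rfl⟩ := hx
    obtain ⟨i, hi⟩ := hrange j
    exact ⟨i, hi⟩
  have hcard1 : (Finset.image (fun j : Fin n => lam n (j:ℕ)) Finset.univ).card = n := by
    rw [Finset.card_image_of_injective _ hinj, Finset.card_univ, Fintype.card_fin]
  have hcard2 : (Finset.image e Finset.univ).card = n := by
    refine le_antisymm ?_ ?_
    · calc _ ≤ Finset.univ.card := Finset.card_image_le
        _ = n := by rw [Finset.card_univ, Fintype.card_fin]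
    · exact le_trans (le_of_eq hcard1.symm) (Finset.card_le_card hsub)
  have heq : Finset.image (fun j : Fin n => lam n (j:ℕ)) Finset.univ
      = Finset.image e Finset.univ :=
    Finset.eq_of_subset_of_card_le hsub (by rw [hcard1, hcard2])
  have heinj : Function.Injective e := by
    have h := Finset.injOn_of_card_image_eq (s := (Finset.univ : Finset (Fin n))) (f := e)
      (by rw [hcard2, Finset.card_univ, Fintype.card_fin])
    intro a b hab; exact h (Finset.mem_univ a) (Finset.mem_univ b) hab
  have hex : ∀ i : Fin n, ∃ j : Fin n, lam n (j:ℕ) = e i := by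
    intro i
    have : e i ∈ Finset.image (fun j : Fin n => lam n (j:ℕ)) Finset.univ := by
      rw [heq]; exact Finset.mem_image_of_mem e (Finset.mem_univ i)
    simpa using this
  choose g hg using hex
  have hgbij : Function.Bijective g :=
    Finite.injective_iff_bijective.1
      (fun a b hab => heinj (by rw [← hg a, ← hg b, hab]))
  refine ⟨Equiv.ofBijective g hgbij, fun i => ?_⟩
  have hcoe : ((Equiv.ofBijective g hgbij) i : Fin n) = g i := rfl
  rw [hcoe, ← hg i]
  have hj : ((g i : ℕ)) < n := (g i).isLt
  have hs := sin_ang_pos hj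
  rw [lam, show (1:ℝ)/(2*Real.sin (ang n (g i : ℕ)))^2
      = (1/(2*Real.sin (ang n (g i : ℕ))))^2 by rw [div_pow, one_pow],
    Real.sqrt_sq (by positivity)]
  simp [ang]
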